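/- Let X be a finite alphabet, ↢ ∉ X, L₁ = {w ∈ (X∪{↢})* : w^↩ = λ}, and let h be the substitution h(a) = L₁·a for a ∈ X. Then for every dictionary V ⊆ X*, one has (V^ω)≈ = h(V^ω) = (h(V))^ω; in particular if A ⊆ X^ω is an ω-power then A≈ is an ω-power. -/

import Mathlib

open Set

/-- Finite levels of the Borel hierarchy: index `n` corresponds to level `n+1`.
Index 0 gives (open, closed); index `n+1` gives (countable unions of level-`n` Π sets,
countable intersections of level-`n` Σ sets). -/
def sigmaPiAux (α : Type*) [TopologicalSpace α] : ℕ → (Set α → Prop) × (Set α → Prop)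
  | 0 => (fun s => IsOpen s, fun s => IsClosed s)
  | n + 1 =>
      (fun s => ∃ f : ℕ → Set α, (∀ i, (sigmaPiAux α n).2 (f i)) ∧ s = ⋃ i, f i,
       fun s => ∃ f : ℕ → Set α, (∀ i, (sigmaPiAux α n).1 (f i)) ∧ s = ⋂ i, f i)

/-- The class Σ⁰ₖ of the Borel hierarchy (for `k ≥ 1`). -/
def SigmaClass {α : Type*} [TopologicalSpace α] (k : ℕ) (s : Set α) : Prop :=
  (sigmaPiAux α (k - 1)).1 s

/-- The class Π⁰ₖ of the Borel hierarchy (for `k ≥ 1`). -/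
def PiClass {α : Type*} [TopologicalSpace α] (k : ℕ) (s : Set α) : Prop :=
  (sigmaPiAux α (k - 1)).2 s

/-- A finite word `l` is a prefix of the infinite word `x`. -/
def PrefixOf {α : Type*} (l : List α) (x : ℕ → α) : Prop :=
  ∀ (i : ℕ) (h : i < l.length), l.get ⟨i, h⟩ = x i

/-- The ω-power of a dictionary `V`: infinite concatenations of nonempty words of `V`. -/
def omegaPow {α : Type*} (V : Set (List α)) : Set (ℕ → α) :=
  {x | ∃ u : ℕ → List α, (∀ i, u i ∈ V ∧ u i ≠ []) ∧
        ∀ n, PrefixOf (((List.range n).map u).flatten) x}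

/-- Words over `X ∪ {b}` (with `b = none`) containing infinitely many letters of `X`. -/
def Zinf (X : Type*) : Set (ℕ → Option X) := {x | ∀ N, ∃ m, N ≤ m ∧ (x m).isSome}

/-- The map deleting every occurrence of the letter `b = none`. -/
noncomputable def phi {X : Type*} [Inhabited X] (x : ℕ → Option X) : ℕ → X :=
  fun n => (x (Nat.nth (fun m => (x m).isSome = true) n)).getD default

/-- `A^b = {x ∈ (X ∪ {b})^ω : x(/b) ∈ A}`. -/
def bPower {X : Type*} [Inhabited X] (A : Set (ℕ → X)) : Set (ℕ → Option X) :=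
  {x | x ∈ Zinf X ∧ phi x ∈ A}

/-- Wadge reducibility. -/
def WadgeLE {α β : Type*} [TopologicalSpace α] [TopologicalSpace β]
    (L : Set α) (L' : Set β) : Prop :=
  ∃ f : α → β, Continuous f ∧ L = f ⁻¹' L'

/-- Substitution extended to finite words. -/
def subWord {X Y : Type*} (f : X → Set (List Y)) : List X → Set (List Y)
  | [] => {[]}
  | a :: w => {l | ∃ u v, u ∈ f a ∧ v ∈ subWord f w ∧ l = u ++ v}

/-- Substitution extended to dictionaries. -/
def subLang {X Y : Type*} (f : X → Set (List Y)) (V : Set (List X)) : Set (List Y) :=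
  ⋃ w ∈ V, subWord f w

/-- Substitution extended to an infinite word. -/
def subOmega {X Y : Type*} (f : X → Set (List Y)) (x : ℕ → X) : Set (ℕ → Y) :=
  {y | ∃ u : ℕ → List Y, (∀ i, u i ∈ f (x i)) ∧
        ∀ n, PrefixOf (((List.range n).map u).flatten) y}

/-- Substitution extended to ω-languages. -/
def subOmegaImage {X Y : Type*} (f : X → Set (List Y)) (L : Set (ℕ → X)) : Set (ℕ → Y) :=
  ⋃ x ∈ L, subOmega f x



/-- Left-to-right evaluation of erasers (`none` = ↢), where an eraser with nothing to
erase is simply ignored. -/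
def evalT {X : Type*} (w : List (Option X)) : List X :=
  w.foldl (fun s c => match c with | some a => s ++ [a] | none => s.dropLast) []

/-- Left-to-right evaluation of erasers, undefined (`none` result) as soon as an eraser
has nothing to erase. -/
def evalH {X : Type*} (w : List (Option X)) : Option (List X) :=
  w.foldl (fun s? c => s?.bind fun s =>
      match c with
      | some a => some (s ++ [a])
      | none => match s with | [] => none | _ :: _ => some s.dropLast)
    (some [])

/-- The prefix of length `k` of the infinite word `x`. -/
def prefTake {X : Type*} (x : ℕ → X) (k : ℕ) : List X := (List.range k).map x

/-- `L∼ = {x : x^↢ ∈ L}`: the evaluations of the finite prefixes of `x` converge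
(in Duparc's sense of eventually stable prefixes) to an infinite word lying in `L`. -/
def Ltilde {X : Type*} (L : Set (ℕ → X)) : Set (ℕ → Option X) :=
  {x | ∃ y ∈ L, ∀ k, ∃ n, ∀ p, n ≤ p → (evalT (prefTake x p)).take k = prefTake y k}

/-- `L≈ = {x : x^↩ is defined and belongs to L}`: every finite prefix of `x` evaluates
without error and the evaluations converge to an infinite word lying in `L`. -/
def Lapprox {X : Type*} (L : Set (ℕ → X)) : Set (ℕ → Option X) :=
  {x | (∀ n, (evalH (prefTake x n)).isSome) ∧
       ∃ y ∈ L, ∀ k, ∃ n, ∀ p, n ≤ p →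
          ((evalH (prefTake x p)).getD []).take k = prefTake y k}
/-- `L₁ = {w ∈ (X ∪ {↢})* : w^↩ = λ}`. -/
def L1 (X : Type*) : Set (List (Option X)) := {w | evalH w = some ([] : List X)}

/-- The substitution `h(a) = L₁·a`. -/
def hsub (X : Type*) : X → Set (List (Option X)) :=
  fun a => {l | ∃ w ∈ L1 X, l = w ++ [some a]}

namespace Er
variable {X : Type*}

def f : Option (List X) → Option X → Option (List X) := fun s? c => s?.bind fun s =>
  match c with
  | some a => some (s ++ [a])
  | none => match s with | [] => none | _ :: _ => some s.dropLast

def evalHF (s : List X) (w : List (Option X)) : Option (List X) := w.foldl f (some s)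

lemma evalH_eq (w : List (Option X)) : evalH w = evalHF [] w := rfl

lemma foldl_none (w : List (Option X)) : w.foldl f none = none := by
  induction w with
  | nil => rfl
  | cons c w ih => simpa [f] using ih

lemma evalHF_append (s : List X) (w1 w2 : List (Option X)) :
    evalHF s (w1 ++ w2) = (evalHF s w1).elim none (fun t => evalHF t w2) := by
  rw [evalHF, List.foldl_append]
  cases h : evalHF s w1 with
  | none => rw [show List.foldl f (some s) w1 = none from h]; simp [foldl_none]
  | some t => rw [show List.foldl f (some s) w1 = some t from h]; rfl

lemma evalHF_push (s : List X) (a : X) : evalHF s [some a] = some (s ++ [a]) := rfl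

lemma evalHF_pop (s : List X) (hs : s ≠ []) : evalHF s [none] = some s.dropLast := by
  cases s with
  | nil => exact absurd rfl hs
  | cons b t => rfl

/-- Lemma A: lifting a successful evaluation to a bigger initial stack. -/
lemma evalHF_lift (w : List (Option X)) (s t : List X) (h : evalH w = some t) :
    evalHF s w = some (s ++ t) := by
  induction w using List.reverseRecOn generalizing t with
  | nil =>
    simp only [evalH, List.foldl_nil, Option.some.injEq] at h
    simp [evalHF, ← h]
  | append_singleton w c ih =>
    rw [evalH_eq, evalHF_append] at h
    cases h0 : evalHF ([] : List X) w with
    | none => rw [h0] at h; simp at h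
    | some t0 =>
      rw [h0] at h; simp at h
      have := ih t0 (by rw [evalH_eq, h0])
      rw [evalHF_append, this]
      cases c with
      | some a => simp [evalHF, f] at h ⊢; simp [h]
      | none =>
        cases t0 with
        | nil => simp [evalHF, f] at h
        | cons b u =>
          simp only [Option.elim, evalHF_pop _ (List.cons_ne_nil b u)] at h
          simp only [Option.elim, evalHF_pop _ (by simp : s ++ b :: u ≠ [])]
          simp only [Option.some.injEq] at h ⊢
          rw [← h, List.dropLast_append_of_ne_nil (List.cons_ne_nil b u)]

/-- Every prefix of a successfully evaluating word evaluates successfully. -/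
lemma evalH_take_isSome (w : List (Option X)) (h : (evalH w).isSome) (n : ℕ) :
    (evalH (w.take n)).isSome := by
  by_contra hn
  rw [Option.not_isSome_iff_eq_none] at hn
  rw [← List.take_append_drop n w, evalH_eq, evalHF_append, ← evalH_eq, hn] at h
  simp at h

/-- Lemma B: if the evaluation from stack `s` keeps `s` untouched throughout,
then the word evaluates from the empty stack too. -/
lemma evalHF_truncate (w : List (Option X)) (s : List X)
    (h : ∀ n, n ≤ w.length → ∃ r, evalHF s (w.take n) = some (s ++ r)) :
    ∃ t, evalH w = some t ∧ evalHF s w = some (s ++ t) := by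
  induction w using List.reverseRecOn with
  | nil => exact ⟨[], rfl, by simp [evalHF]⟩
  | append_singleton w c ih =>
    obtain ⟨t', ht', hst'⟩ := ih (fun n hn => by
      have := h n (by simp; omega)
      rwa [List.take_append_of_le_length hn] at this)
    obtain ⟨r, hr⟩ := h (w.length + 1) (by simp)
    rw [show (w ++ [c]).take (w.length + 1) = w ++ [c] by
      apply List.take_of_length_le; simp] at hr
    rw [evalHF_append, hst'] at hr ⊢
    simp only [Option.elim] at hr ⊢
    cases c with
    | some a =>
      refine ⟨t' ++ [a], ?_, ?_⟩
      · rw [evalH_eq, evalHF_append, ← evalH_eq, ht']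
        simp [evalHF, f]
      · simp [evalHF, f]
    | none =>
      have hne : t' ≠ [] := by
        rintro rfl
        simp only [List.append_nil] at hr
        cases s with
        | nil => simp [evalHF, f] at hr
        | cons b u =>
          rw [evalHF_pop _ (List.cons_ne_nil b u)] at hr
          simp only [Option.some.injEq] at hr
          have := congrArg List.length hr
          simp at this; omega
      refine ⟨t'.dropLast, ?_, ?_⟩
      · rw [evalH_eq, evalHF_append, ← evalH_eq, ht']
        simp only [Option.elim]
        exact evalHF_pop _ hne
      · rw [evalHF_pop _ (by simp [hne])]
        rw [List.dropLast_append_of_ne_nil hne]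
section Conc
variable {α : Type*} (B : ℕ → List α) (d : α)

def offB (n : ℕ) : ℕ := (((List.range n).map B).flatten).length

noncomputable def cseq (n : ℕ) : α := (((List.range (n+1)).map B).flatten).getD n d

lemma flat_succ (n : ℕ) :
    ((List.range (n+1)).map B).flatten = ((List.range n).map B).flatten ++ B n := by
  rw [List.range_succ, List.map_append, List.flatten_append]; simp

lemma offB_succ (n : ℕ) : offB B (n+1) = offB B n + (B n).length := by
  simp [offB, flat_succ]

lemma flat_prefix {m m' : ℕ} (h : m ≤ m') :
    ((List.range m).map B).flatten <+: ((List.range m').map B).flatten := by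
  obtain ⟨k, rfl⟩ := Nat.exists_eq_add_of_le h
  rw [List.range_add, List.map_append, List.flatten_append]
  exact List.prefix_append _ _

variable (hB : ∀ n, B n ≠ [])

include hB in
lemma le_offB (n : ℕ) : n ≤ offB B n := by
  induction n with
  | zero => simp [offB]
  | succ n ih =>
    rw [offB_succ]
    have : (B n).length ≠ 0 := fun h => hB n (List.eq_nil_of_length_eq_zero h)
    omega

include hB in
lemma map_cseq (m : ℕ) :
    (List.range (offB B m)).map (cseq B d) = ((List.range m).map B).flatten := by
  apply List.ext_getElem
  · simp [offB]
  intro i h1 h2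
  have hio : i < offB B (i+1) := lt_of_lt_of_le (Nat.lt_succ_self i) (le_offB B hB (i+1))
  have h1' : i < offB B m := by simpa [offB] using h2
  simp only [List.getElem_map, List.getElem_range]
  show (((List.range (i+1)).map B).flatten).getD i d = _
  rw [List.getD_eq_getElem _ _ (by simpa [offB] using hio)]
  rcases le_total (i+1) m with hm | hm
  · exact (flat_prefix B hm).getElem (by simpa [offB] using hio)
  · exact ((flat_prefix B hm).getElem h2).symm

include hB in
lemma cseq_block {b j : ℕ} (hj : j < (B b).length) :
    cseq B d (offB B b + j) = (B b).get ⟨j, hj⟩ := by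
  have hlt : offB B b + j < offB B (b+1) := by rw [offB_succ]; omega
  have := map_cseq B d hB (b+1)
  have h2 := congrArg (fun l => l[offB B b + j]?) this
  simp only [List.getElem?_map] at h2
  rw [List.getElem?_range hlt] at h2
  rw [flat_succ] at h2
  rw [List.getElem?_append_right (by simp [offB])] at h2
  simp only [offB] at h2 ⊢
  rw [show ((List.range b).map B).flatten.length + j - ((List.range b).map B).flatten.length = j by omega] at h2
  rw [List.getElem?_eq_getElem hj] at h2
  simpa using h2

include hB in
lemma conc_cseq (m : ℕ) : PrefixOf (((List.range m).map B).flatten) (cseq B d) := by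
  rw [← map_cseq B d hB m]
  intro i h
  simp [List.get_eq_getElem]

end Conc

lemma prefixOf_mono {α : Type*} {l l' : List α} {x : ℕ → α} (h : PrefixOf l x)
    (h' : l' <+: l) : PrefixOf l' x := by
  intro i hi
  have := h i (lt_of_lt_of_le hi h'.length_le)
  rw [← this]
  simp only [List.get_eq_getElem]
  exact h'.getElem hi

lemma prefixOf_prefTake {α : Type*} (x : ℕ → α) (n : ℕ) : PrefixOf (prefTake x n) x := by
  intro i hi; simp [prefTake, List.get_eq_getElem]

lemma prefixOf_eq_prefTake {α : Type*} {l : List α} {x : ℕ → α} (h : PrefixOf l x) :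
    l = prefTake x l.length := by
  apply List.ext_getElem (by simp [prefTake])
  intro i h1 h2
  have := h i h1
  simpa [prefTake, List.get_eq_getElem] using this

lemma prefTake_add {α : Type*} (x : ℕ → α) (p j : ℕ) :
    prefTake x (p + j) = prefTake x p ++ (List.range j).map (fun i => x (p + i)) := by
  simp [prefTake, List.range_add, List.map_map, Function.comp]

lemma prefTake_succ {α : Type*} (x : ℕ → α) (n : ℕ) :
    prefTake x (n+1) = prefTake x n ++ [x n] := by
  simp [prefTake, List.range_succ]

lemma prefTake_take {α : Type*} (x : ℕ → α) {k n : ℕ} (h : k ≤ n) :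
    (prefTake x n).take k = prefTake x k := by
  simp [prefTake, ← List.map_take, List.take_range, Nat.min_eq_left h]

end Er

namespace Er


lemma subWord_of_pieces {X Y : Type*} (f : X → Set (List Y)) :
    ∀ (w : List X) (q : ℕ → List Y), (∀ j (h : j < w.length), q j ∈ f (w.get ⟨j, h⟩)) →
      ((List.range w.length).map q).flatten ∈ subWord f w := by
  intro w
  induction w with
  | nil => intro q _; simp [subWord]
  | cons a w ih =>
    intro q hq
    rw [List.length_cons, List.range_succ_eq_map, List.map_cons, List.map_map,
      List.flatten_cons]
    exact ⟨q 0, _, hq 0 (by simp), ih (fun j => q (j+1))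
      (fun j h => hq (j+1) (by simpa using Nat.succ_lt_succ h)), rfl⟩

lemma subWord_pieces {X Y : Type*} (f : X → Set (List Y)) :
    ∀ (w : List X) (l : List Y), l ∈ subWord f w →
      ∃ q : ℕ → List Y, (∀ j (h : j < w.length), q j ∈ f (w.get ⟨j, h⟩)) ∧
        l = ((List.range w.length).map q).flatten := by
  intro w
  induction w with
  | nil =>
    intro l hl
    refine ⟨fun _ => [], fun j h => absurd h (by simp), ?_⟩
    simpa [subWord] using hl
  | cons a w ih =>
    rintro l ⟨u, v, hu, hv, rfl⟩
    obtain ⟨q', hq', rfl⟩ := ih v hv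
    refine ⟨fun j => match j with | 0 => u | j+1 => q' j, fun j h => ?_, ?_⟩
    · match j with
      | 0 => exact hu
      | j+1 => exact hq' j (by simpa using Nat.lt_of_succ_lt_succ h)
    · rw [List.length_cons, List.range_succ_eq_map, List.map_cons, List.map_map,
        List.flatten_cons]
      rfl


end Er
namespace Er
variable {α : Type*} (B : ℕ → List α)

lemma offB_mono {m m' : ℕ} (h : m ≤ m') : offB B m ≤ offB B m' :=
  (flat_prefix B h).length_le

lemma exists_block (hB : ∀ n, B n ≠ []) (p : ℕ) :
    ∃ b r, r < (B b).length ∧ p = offB B b + r := by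
  induction p with
  | zero => exact ⟨0, 0, List.length_pos_iff.mpr (hB 0), rfl⟩
  | succ p ih =>
    obtain ⟨b, r, hr, rfl⟩ := ih
    rcases Nat.lt_or_ge (r+1) ((B b).length) with h | h
    · exact ⟨b, r+1, h, rfl⟩
    · refine ⟨b+1, 0, List.length_pos_iff.mpr (hB (b+1)), ?_⟩
      rw [offB_succ]; omega

end Er
namespace Er
variable {X : Type}

lemma hsub_ne_nil {a : X} {l : List (Option X)} (h : l ∈ hsub X a) : l ≠ [] := by
  obtain ⟨w, _, rfl⟩ := h; simp

lemma eval_blocks {v : ℕ → List (Option X)} {y : ℕ → X}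
    (hv : ∀ i, v i ∈ hsub X (y i)) (m : ℕ) :
    evalH (((List.range m).map v).flatten) = some (prefTake y m) := by
  induction m with
  | zero => rfl
  | succ m ih =>
    rw [flat_succ, evalH_eq, evalHF_append, ← evalH_eq, ih]
    obtain ⟨w, hw, hvm⟩ := hv m
    simp only [Option.elim, hvm]
    rw [evalHF_append, evalHF_lift w _ [] hw]
    simp only [List.append_nil, Option.elim]
    rw [evalHF_push, prefTake_succ]

lemma take_map_range {α : Type*} (f : ℕ → α) {n L : ℕ} (h : n ≤ L) :
    ((List.range L).map f).take n = (List.range n).map f := by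
  rw [← List.map_take, List.take_range, Nat.min_eq_left h]

lemma P1b (V : Set (List X)) :
    subOmegaImage (hsub X) (omegaPow V) ⊆ Lapprox (omegaPow V) := by
  intro x hx
  simp only [subOmegaImage, mem_iUnion, exists_prop] at hx
  obtain ⟨y, hyV, v, hv, hconc⟩ := hx
  have hvne : ∀ n, v n ≠ [] := fun n => hsub_ne_nil (hv n)
  -- evaluation of any prefix
  have key : ∀ p, ∃ b t, p < offB v (b+1) ∧
      evalH (prefTake x p) = some (prefTake y b ++ t) := by
    intro p
    obtain ⟨b, r, hr, rfl⟩ := exists_block v hvne p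
    obtain ⟨w, hw, hvb⟩ := hv b
    have hrw : r ≤ w.length := by
      have h' := hr
      rw [hvb, List.length_append, List.length_cons, List.length_nil] at h'
      omega
    have hpref : prefTake x (offB v b + r) =
        ((List.range b).map v).flatten ++ (v b).take r := by
      have h1 : ((List.range (b+1)).map v).flatten = prefTake x (offB v (b+1)) := by
        have := prefixOf_eq_prefTake (hconc (b+1)); rwa [show (((List.range (b+1)).map v).flatten).length = offB v (b+1) from rfl] at this
      have h2 : prefTake x (offB v b + r) = (prefTake x (offB v (b+1))).take (offB v b + r) := by
        rw [prefTake_take]; rw [offB_succ]; omega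
      rw [h2, ← h1, flat_succ]
      rw [List.take_append]
      rw [show (((List.range b).map v).flatten).length = offB v b from rfl]
      rw [List.take_of_length_le (by rw [show (((List.range b).map v).flatten).length = offB v b from rfl]; omega)]
      rw [Nat.add_sub_cancel_left]
    have heval : evalH (prefTake x (offB v b + r)) =
        evalHF (prefTake y b) ((v b).take r) := by
      rw [hpref, evalH_eq, evalHF_append, ← evalH_eq, eval_blocks hv b]
      rfl
    rw [hvb, List.take_append_of_le_length hrw] at heval
    have hsome := evalH_take_isSome w (by rw [hw]; rfl) r
    obtain ⟨t, ht⟩ := Option.isSome_iff_exists.mp hsome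
    refine ⟨b, t, by rw [offB_succ]; omega, ?_⟩
    rw [heval, evalHF_lift _ _ _ ht]
  constructor
  · intro p
    obtain ⟨b, t, _, h⟩ := key p
    rw [h]; rfl
  · refine ⟨y, hyV, fun k => ⟨offB v k, fun p hp => ?_⟩⟩
    obtain ⟨b, t, hb, h⟩ := key p
    have hbk : k ≤ b := by
      by_contra hc
      have : offB v (b+1) ≤ offB v k := offB_mono v (by omega)
      omega
    rw [h]
    simp only [Option.getD_some]
    rw [List.take_append_of_le_length (by simp [prefTake]; omega), prefTake_take y hbk]

end Er
namespace Er
variable {X : Type}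

lemma conc_letter {α : Type*} {B : ℕ → List α} {x : ℕ → α}
    (hC : ∀ m, PrefixOf (((List.range m).map B).flatten) x) {n j : ℕ}
    (hj : j < (B n).length) : x (offB B n + j) = (B n).get ⟨j, hj⟩ := by
  have hl : offB B n + j < (((List.range (n+1)).map B).flatten).length := by
    show _ < offB B (n+1); rw [offB_succ]; omega
  rw [← hC (n+1) (offB B n + j) hl]
  simp only [List.get_eq_getElem]
  rw [List.getElem_of_eq (flat_succ B n) hl]
  rw [List.getElem_append_right (show (((List.range n).map B).flatten).length ≤ offB B n + j from Nat.le_add_right _ j)]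
  congr 1
  show offB B n + j - (((List.range n).map B).flatten).length = j
  rw [show (((List.range n).map B).flatten).length = offB B n from rfl]
  omega

lemma flat_range_add {α : Type*} (v : ℕ → List α) (s L : ℕ) :
    ((List.range (s + L)).map v).flatten =
      ((List.range s).map v).flatten ++ ((List.range L).map (fun j => v (s + j))).flatten := by
  rw [List.range_add, List.map_append, List.flatten_append, List.map_map]
  rfl

lemma P2a (V : Set (List X)) :
    subOmegaImage (hsub X) (omegaPow V) ⊆ omegaPow (subLang (hsub X) V) := by
  intro y hy
  simp only [subOmegaImage, mem_iUnion, exists_prop] at hy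
  obtain ⟨x, ⟨u, hu, hcu⟩, v, hv, hcv⟩ := hy
  set g : ℕ → List (Option X) :=
    fun n => ((List.range ((u n).length)).map (fun j => v (offB u n + j))).flatten with hg
  have hregroup : ∀ m, ((List.range m).map g).flatten = ((List.range (offB u m)).map v).flatten := by
    intro m
    induction m with
    | zero => rfl
    | succ m ih => rw [flat_succ, ih, offB_succ, flat_range_add]
  refine ⟨g, fun n => ⟨?_, ?_⟩, fun m => by rw [hregroup]; exact hcv (offB u m)⟩
  · simp only [subLang, mem_iUnion, exists_prop]
    refine ⟨u n, (hu n).1, ?_⟩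
    exact subWord_of_pieces _ _ _ (fun j h => by rw [← conc_letter hcu h]; exact hv _)
  · have h0 : 0 < (u n).length := List.length_pos_iff.mpr (hu n).2
    intro hc
    rw [hg] at hc
    simp only [List.flatten_eq_nil_iff] at hc
    exact hsub_ne_nil (hv (offB u n + 0)) (hc _ (List.mem_map_of_mem (List.mem_range.mpr h0)))

lemma P2b (V : Set (List X)) :
    omegaPow (subLang (hsub X) V) ⊆ subOmegaImage (hsub X) (omegaPow V) := by
  intro y hy
  obtain ⟨g, hg, hcg⟩ := hy
  -- choose a word and pieces for each block
  have hch : ∀ n, ∃ w ∈ V, ∃ q : ℕ → List (Option X),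
      (∀ j (h : j < w.length), q j ∈ hsub X (w.get ⟨j, h⟩)) ∧
      g n = ((List.range w.length).map q).flatten := by
    intro n
    have := (hg n).1
    simp only [subLang, mem_iUnion, exists_prop] at this
    obtain ⟨w, hwV, hsw⟩ := this
    obtain ⟨q, hq, hgq⟩ := subWord_pieces (hsub X) w (g n) hsw
    exact ⟨w, hwV, q, hq, hgq⟩
  choose w hwV q hq hgq using hch
  have hwne : ∀ n, w n ≠ [] := by
    intro n hn
    apply (hg n).2
    rw [hgq n, hn]
    rfl
  have hd : X := (w 0).head (hwne 0)
  set pieces : ℕ → List (List (Option X)) :=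
    fun n => (List.range ((w n).length)).map (q n) with hpieces
  have hpne : ∀ n, pieces n ≠ [] := by
    intro n hn
    have := congrArg List.length hn
    simp [hpieces] at this
    exact hwne n this
  have hplen : ∀ n, (pieces n).length = (w n).length := by intro n; simp [hpieces]
  have hoff : ∀ n, offB pieces n = offB w n := by
    intro n
    simp only [offB, List.length_flatten, List.map_map]
    congr 1
    apply List.map_congr_left
    intro i _
    simp [hpieces]
  set x : ℕ → X := cseq w hd with hx
  set v : ℕ → List (Option X) := cseq pieces [] with hvdef
  have hxmem : x ∈ omegaPow V := ⟨w, fun i => ⟨hwV i, hwne i⟩, conc_cseq w hd hwne⟩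
  simp only [subOmegaImage, mem_iUnion, exists_prop]
  refine ⟨x, hxmem, v, ?_, ?_⟩
  · intro n
    obtain ⟨b, j, hj, rfl⟩ := exists_block w hwne n
    have hj' : j < (pieces b).length := by rw [hplen]; exact hj
    have h1 : v (offB w b + j) = (pieces b).get ⟨j, hj'⟩ := by
      rw [hvdef, ← hoff b]; exact cseq_block pieces [] hpne hj'
    have h2 : x (offB w b + j) = (w b).get ⟨j, hj⟩ := cseq_block w hd hwne hj
    rw [h1, h2]
    have : (pieces b).get ⟨j, hj'⟩ = q b j := by simp [hpieces]
    rw [this]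
    exact hq b j hj
  · intro m
    have h1 : ((List.range m).map v).flatten <+:
        ((List.range (offB pieces m)).map v).flatten :=
      flat_prefix v (le_offB pieces hpne m)
    refine prefixOf_mono ?_ h1
    rw [hvdef, map_cseq pieces [] hpne m]
    rw [List.flatten_flatten]
    rw [List.map_map]
    have : (List.flatten ∘ pieces) = g := by
      funext n
      rw [Function.comp_apply, ← hgq n]
    rw [this]
    exact hcg m

end Er
namespace Er
variable {X : Type}

lemma P1a (V : Set (List X)) :
    Lapprox (omegaPow V) ⊆ subOmegaImage (hsub X) (omegaPow V) := by
  intro x hx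
  classical
  obtain ⟨hx1, y, hyV, hx2⟩ := hx
  set S : ℕ → List X := fun p => (evalH (prefTake x p)).getD [] with hSdef
  have hS : ∀ p, evalH (prefTake x p) = some (S p) := by
    intro p
    obtain ⟨s, hs⟩ := Option.isSome_iff_exists.mp (hx1 p)
    rw [hs]; rw [hSdef]; simp [hs]
  have hS0 : S 0 = [] := by
    rw [hSdef]; simp [prefTake]; rfl
  -- step relation
  have hstep : ∀ p, (∃ a, x p = some a ∧ S (p+1) = S p ++ [a]) ∨
      (x p = none ∧ ∃ c, S p = S (p+1) ++ [c]) := by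
    intro p
    have h1 : evalH (prefTake x (p+1)) = evalHF (S p) [x p] := by
      rw [prefTake_succ, evalH_eq, evalHF_append, ← evalH_eq, hS p]; rfl
    cases hxp : x p with
    | some a =>
      left
      refine ⟨a, rfl, ?_⟩
      have := hS (p+1)
      rw [h1, hxp, evalHF_push] at this
      simpa using this.symm
    | none =>
      right
      refine ⟨rfl, ?_⟩
      have hne : S p ≠ [] := by
        intro hc
        have := hS (p+1)
        rw [h1, hxp, hc] at this
        simp [evalHF, f] at this
      have := hS (p+1)
      rw [h1, hxp, evalHF_pop _ hne] at this
      refine ⟨(S p).getLast hne, ?_⟩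
      conv_lhs => rw [← List.dropLast_append_getLast hne]
      congr 1
      simpa using this
  set P : ℕ → ℕ → Prop := fun k n => ∀ p, n ≤ p → (S p).take k = prefTake y k with hPdef
  have hP : ∀ k, ∃ n, P k n := hx2
  set b : ℕ → ℕ := fun k => Nat.find (hP k) with hbdef
  have hspec : ∀ k p, b k ≤ p → (S p).take k = prefTake y k := fun k => Nat.find_spec (hP k)
  have hb0 : b 0 = 0 := by
    rw [hbdef]
    simp only [Nat.find_eq_zero]
    intro p _
    simp [prefTake]
  have hmono : ∀ k, b k ≤ b (k+1) := by
    intro k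
    rw [hbdef]
    apply Nat.find_min'
    intro p hp
    rw [← prefTake_take y (Nat.le_succ k), ← hspec (k+1) p hp, List.take_take,
      Nat.min_eq_left (Nat.le_succ k)]
  -- minimality: failure just before b k
  have hfail : ∀ k, 1 ≤ k → 1 ≤ b k ∧ (S (b k - 1)).take k ≠ prefTake y k := by
    intro k hk
    have hbk1 : 1 ≤ b k := by
      by_contra hc
      have hb0' : b k = 0 := by omega
      have := hspec k 0 (by omega)
      rw [hS0] at this
      have hlen := congrArg List.length this
      simp [prefTake] at hlen
      omega
    refine ⟨hbk1, ?_⟩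
    have hmin : ¬ P k (b k - 1) := Nat.find_min (hP k) (show b k - 1 < b k from by omega)
    simp only [hPdef] at hmin
    push_neg at hmin
    obtain ⟨p, hp1, hp2⟩ := hmin
    have : p = b k - 1 := by
      by_contra hc
      exact hp2 (hspec k p (by omega))
    rwa [this] at hp2
  -- the state at b k is exactly prefTake y k
  have hstate : ∀ k, S (b k) = prefTake y k := by
    intro k
    rcases Nat.eq_zero_or_pos k with rfl | hk
    · rw [hb0, hS0]; rfl
    have h1 : (S (b k)).take k = prefTake y k := hspec k (b k) le_rfl
    have h2 : S (b k) = prefTake y k ++ (S (b k)).drop k := by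
      conv_lhs => rw [← List.take_append_drop k (S (b k)), h1]
    by_cases ht : (S (b k)).drop k = []
    · rw [h2, ht, List.append_nil]
    · exfalso
      obtain ⟨hbk1, hf⟩ := hfail k hk
      have hlen : k + 1 ≤ (S (b k)).length := by
        have := List.length_pos_iff.mpr ht
        rw [List.length_drop] at this
        omega
      apply hf
      rcases hstep (b k - 1) with ⟨a, hxa, hSa⟩ | ⟨hxn, c, hSc⟩
      · rw [show b k - 1 + 1 = b k by omega] at hSa
        have : S (b k - 1) = (S (b k)).dropLast := by rw [hSa, List.dropLast_concat]
        rw [this, List.dropLast_eq_take, List.take_take,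
          Nat.min_eq_left (by omega), h1]
      · rw [show b k - 1 + 1 = b k by omega] at hSc
        rw [hSc, List.take_append_of_le_length (by omega), h1]
  -- the final letter of each block
  have hblock : ∀ k, b k < b (k+1) ∧ x (b (k+1) - 1) = some (y k) ∧
      S (b (k+1) - 1) = prefTake y k := by
    intro k
    have hlt : b k < b (k+1) := by
      rcases Nat.lt_or_ge (b k) (b (k+1)) with h | h
      · exact h
      · exfalso
        have heq : b k = b (k+1) := le_antisymm (hmono k) h
        have := hstate k
        rw [heq, hstate (k+1)] at this
        have := congrArg List.length this
        simp [prefTake] at this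
    obtain ⟨hbk1, hf⟩ := hfail (k+1) (by omega)
    rcases hstep (b (k+1) - 1) with ⟨a, hxa, hSa⟩ | ⟨hxn, c, hSc⟩
    · rw [show b (k+1) - 1 + 1 = b (k+1) by omega, hstate (k+1), prefTake_succ] at hSa
      have hS' : S (b (k+1) - 1) = prefTake y k := by
        have := congrArg List.dropLast hSa
        rw [List.dropLast_concat, List.dropLast_concat] at this
        exact this.symm
      have ha : a = y k := by
        have := congrArg List.getLast? hSa
        rw [List.getLast?_concat, List.getLast?_concat] at this
        simpa using this.symm
      exact ⟨hlt, by rw [hxa, ha], hS'⟩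
    · exfalso
      apply hf
      rw [show b (k+1) - 1 + 1 = b (k+1) by omega] at hSc
      rw [hSc, hstate (k+1), List.take_append_of_le_length (by simp [prefTake]),
        List.take_of_length_le (by simp [prefTake])]
  -- the blocks
  set v : ℕ → List (Option X) :=
    fun k => (List.range (b (k+1) - 1 - b k)).map (fun i => x (b k + i)) ++ [some (y k)]
    with hvdef
  have hseg : ∀ k j, evalHF (prefTake y k) ((List.range j).map (fun i => x (b k + i)))
      = some (S (b k + j)) := by
    intro k j
    have : prefTake x (b k + j) = prefTake x (b k) ++ (List.range j).map (fun i => x (b k + i)) :=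
      prefTake_add x (b k) j
    have h2 := hS (b k + j)
    rw [this, evalH_eq, evalHF_append, ← evalH_eq, hS (b k), hstate k] at h2
    exact h2
  have hvmem : ∀ k, v k ∈ hsub X (y k) := by
    intro k
    refine ⟨(List.range (b (k+1) - 1 - b k)).map (fun i => x (b k + i)), ?_, rfl⟩
    -- the middle segment is in L1
    have hcond : ∀ n, n ≤ ((List.range (b (k+1) - 1 - b k)).map (fun i => x (b k + i))).length →
        ∃ r, evalHF (prefTake y k)
          (((List.range (b (k+1) - 1 - b k)).map (fun i => x (b k + i))).take n)
          = some (prefTake y k ++ r) := by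
      intro n hn
      rw [List.length_map, List.length_range] at hn
      rw [← List.map_take, List.take_range, Nat.min_eq_left hn]
      rw [hseg k n]
      have := hspec k (b k + n) (Nat.le_add_right _ _)
      exact ⟨(S (b k + n)).drop k, by
        conv_lhs => rw [show S (b k + n) = (S (b k + n)).take k ++ (S (b k + n)).drop k from (List.take_append_drop k _).symm, this]⟩
    obtain ⟨t, ht1, ht2⟩ := evalHF_truncate
      ((List.range (b (k+1) - 1 - b k)).map (fun i => x (b k + i))) (prefTake y k) hcond
    have hL := hseg k (b (k+1) - 1 - b k)
    rw [show b k + (b (k+1) - 1 - b k) = b (k+1) - 1 from by have := (hblock k).1; omega,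
      (hblock k).2.2] at hL
    rw [ht2] at hL
    have ht0 : t = [] := by simpa using hL
    rwa [ht0] at ht1
  have hvconc : ∀ m, ((List.range m).map v).flatten = prefTake x (b m) := by
    intro m
    induction m with
    | zero => rw [hb0]; rfl
    | succ m ih =>
      rw [flat_succ, ih]
      simp only [hvdef]
      have hD : b (m+1) - b m = (b (m+1) - 1 - b m) + 1 := by
        have := (hblock m).1; omega
      have : (List.range (b (m+1) - 1 - b m)).map (fun i => x (b m + i)) ++ [some (y m)]
          = (List.range (b (m+1) - b m)).map (fun i => x (b m + i)) := by
        rw [hD, List.range_succ, List.map_append]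
        congr 1
        simp only [List.map_cons, List.map_nil]
        rw [show b m + (b (m+1) - 1 - b m) = b (m+1) - 1 by have := (hblock m).1; omega]
        rw [(hblock m).2.1]
      rw [this, ← prefTake_add, show b m + (b (m+1) - b m) = b (m+1) by have := (hblock m).1; omega]
  simp only [subOmegaImage, mem_iUnion, exists_prop]
  exact ⟨y, hyV, v, hvmem, fun m => by rw [hvconc]; exact prefixOf_prefTake x (b m)⟩

end Er

/-- `(V^ω)≈ = h(V^ω) = (h(V))^ω`; in particular `A≈` is an ω-power
whenever `A` is. -/
theorem Lapprox_omegaPow {X : Type} [Fintype X] (V : Set (List X)) :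
    Lapprox (omegaPow V) = subOmegaImage (hsub X) (omegaPow V) ∧
    subOmegaImage (hsub X) (omegaPow V) = omegaPow (subLang (hsub X) V) := by
  exact ⟨Set.Subset.antisymm (Er.P1a V) (Er.P1b V),
    Set.Subset.antisymm (Er.P2a V) (Er.P2b V)⟩
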